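/- Let C → Q be a Girard couple with cyclic dualizing element d ∈ C. Then the only right-sided element of C below d is 0, and the only left-sided element of C below d is 0. -/

import Mathlib

/-- A quantale: a complete lattice with an associative multiplication
distributing over arbitrary joins in both variables. -/
class Quantale' (α : Type*) extends CompleteLattice α, Mul α where
  mul_assoc : ∀ a b c : α, a * b * c = a * (b * c)
  mul_sSup : ∀ (a : α) (s : Set α), a * sSup s = ⨆ b ∈ s, a * b
  sSup_mul : ∀ (s : Set α) (a : α), sSup s * a = ⨆ b ∈ s, b * a

/-- A couple of quantales: a quantale `Q`, a quantale `C` which is also a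
`Q`-bimodule, and a coupling map `φ : C → Q` which is a join-preserving
`Q`-bimodule homomorphism satisfying `φ(c₁)·c₂ = c₁·φ(c₂) = c₁·c₂`. -/
structure Couple (C Q : Type*) [Quantale' C] [Quantale' Q] where
  φ : C → Q
  /-- the left action of `Q` on `C` -/
  act : Q → C → C
  /-- the right action of `Q` on `C` -/
  actr : C → Q → C
  act_sSup : ∀ (a : Q) (s : Set C), act a (sSup s) = ⨆ c ∈ s, act a c
  sSup_act : ∀ (s : Set Q) (c : C), act (sSup s) c = ⨆ a ∈ s, act a c
  actr_sSup : ∀ (c : C) (s : Set Q), actr c (sSup s) = ⨆ a ∈ s, actr c a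
  sSup_actr : ∀ (s : Set C) (a : Q), actr (sSup s) a = ⨆ c ∈ s, actr c a
  act_mul : ∀ (a b : Q) (c : C), act (a * b) c = act a (act b c)
  actr_mul : ∀ (c : C) (a b : Q), actr c (a * b) = actr (actr c a) b
  act_actr : ∀ (a : Q) (c : C) (b : Q), actr (act a c) b = act a (actr c b)
  φ_sSup : ∀ s : Set C, φ (sSup s) = ⨆ c ∈ s, φ c
  φ_act : ∀ (a : Q) (c : C), φ (act a c) = a * φ c
  φ_actr : ∀ (c : C) (a : Q), φ (actr c a) = φ c * a
  couple_left : ∀ c₁ c₂ : C, act (φ c₁) c₂ = c₁ * c₂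
  couple_right : ∀ c₁ c₂ : C, actr c₁ (φ c₂) = c₁ * c₂

/-- A Girard couple: a couple together with a cyclic dualizing element `d ∈ C`. -/
structure GirardCouple (C Q : Type*) [Quantale' C] [Quantale' Q] extends Couple C Q where
  d : C
  cyclic : ∀ (a : Q) (c : C), act a c ≤ d ↔ actr c a ≤ d
  /-- `d ⧸ (a → d) = a` for `a ∈ Q` -/
  dualizing_Q₁ : ∀ a : Q, sSup {b : Q | act b (sSup {c : C | actr c a ≤ d}) ≤ d} = a
  /-- `(d ⧸ a) → d = a` for `a ∈ Q` -/
  dualizing_Q₂ : ∀ a : Q, sSup {b : Q | actr (sSup {c : C | act a c ≤ d}) b ≤ d} = a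
  /-- `d ⧸ (c → d) = c` for `c ∈ C` -/
  dualizing_C₁ : ∀ c : C, sSup {c' : C | act (sSup {a : Q | actr c a ≤ d}) c' ≤ d} = c
  /-- `(d ⧸ c) → d = c` for `c ∈ C` -/
  dualizing_C₂ : ∀ c : C, sSup {c' : C | actr c' (sSup {a : Q | act a c ≤ d}) ≤ d} = c

/-- In a Girard couple, the only right- or left-sided element of `C`
below the cyclic dualizing element `d` is `0`. -/
theorem stmt9 {C Q : Type*} [Quantale' C] [Quantale' Q] (gc : GirardCouple C Q) :
    (∀ r : C, gc.actr r ⊤ ≤ r → r ≤ gc.d → r = ⊥) ∧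
    (∀ l : C, gc.act ⊤ l ≤ l → l ≤ gc.d → l = ⊥) := by
  have hbotr : gc.actr ⊥ ⊤ = ⊥ := by
    have := gc.sSup_actr ∅ ⊤
    simpa using this
  have hbotl : gc.act ⊤ ⊥ = ⊥ := by
    have := gc.act_sSup ⊤ ∅
    simpa using this
  have key : ∀ c : C, gc.actr c ⊤ ≤ gc.d →
      sSup {a : Q | gc.actr c a ≤ gc.d} = ⊤ := by
    intro c hc
    refine le_antisymm le_top (le_sSup hc)
  have keyl : ∀ c : C, gc.act ⊤ c ≤ gc.d →
      sSup {a : Q | gc.act a c ≤ gc.d} = ⊤ := by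
    intro c hc
    refine le_antisymm le_top (le_sSup hc)
  constructor
  · intro r hr hrd
    have h1 := gc.dualizing_C₁ r
    rw [key r (hr.trans hrd)] at h1
    have h2 := gc.dualizing_C₁ ⊥
    rw [key ⊥ (by rw [hbotr]; exact bot_le)] at h2
    rw [← h1, ← h2]
  · intro l hl hld
    have h1 := gc.dualizing_C₂ l
    rw [keyl l (hl.trans hld)] at h1
    have h2 := gc.dualizing_C₂ ⊥
    rw [keyl ⊥ (by rw [hbotl]; exact bot_le)] at h2
    rw [← h1, ← h2]
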